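/- The BNN update preserves the simplex for sufficiently small learning rate: if π ∈ Δᴹ, all r̄_j, r̄ ∈ [R_min, R_max], and 0 < α ≤ 1/(M(R_max - R_min)) (with R_max > R_min), then π' defined by π'_i = π_i + α([r̄_i - r̄]₊ - π_i Σ_j [r̄_j - r̄]₊) lies in Δᴹ. -/

import Mathlib

/-- The ERID-BNN update preserves the simplex for sufficiently small learning rate. -/
theorem stmt12 {M : ℕ} (π : Fin M → ℝ) (hπ : π ∈ stdSimplex ℝ (Fin M))
    (rbar : Fin M → ℝ) (r Rmin Rmax : ℝ) (hR : Rmin < Rmax)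
    (hrb : ∀ j, rbar j ∈ Set.Icc Rmin Rmax) (hr : r ∈ Set.Icc Rmin Rmax)
    (α : ℝ) (hα0 : 0 < α) (hα1 : α ≤ 1 / (M * (Rmax - Rmin))) :
    (fun i => π i + α * (max (rbar i - r) 0 - π i * ∑ j, max (rbar j - r) 0))
      ∈ stdSimplex ℝ (Fin M) := by
  obtain ⟨hnn, hsum⟩ := hπ
  set S : ℝ := ∑ j, max (rbar j - r) 0 with hS
  have hS0 : 0 ≤ S := Finset.sum_nonneg fun j _ => le_max_right _ _
  have hSle : S ≤ M * (Rmax - Rmin) := by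
    calc S ≤ ∑ _j : Fin M, (Rmax - Rmin) := by
          apply Finset.sum_le_sum
          intro j _
          have h1 := (hrb j).2
          have h2 := hr.1
          have : rbar j - r ≤ Rmax - Rmin := by linarith
          exact max_le this (by linarith)
      _ = M * (Rmax - Rmin) := by simp [mul_comm]; ring
  have hMpos : 0 < M := by
    rcases Nat.eq_zero_or_pos M with h | h
    · exfalso; subst h; simp at hsum
    · exact h
  have hαS : α * S ≤ 1 := by
    have hden : (0:ℝ) < M * (Rmax - Rmin) := by
      have : (0:ℝ) < M := Nat.cast_pos.mpr hMpos
      nlinarith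
    calc α * S ≤ (1 / (M * (Rmax - Rmin))) * (M * (Rmax - Rmin)) := by
          apply mul_le_mul hα1 hSle hS0
          positivity
      _ = 1 := by field_simp; exact div_self (sub_pos.mpr hR).ne'
  constructor
  · intro i
    have h1 : 0 ≤ max (rbar i - r) 0 := le_max_right _ _
    have h2 : 0 ≤ π i := hnn i
    have key : π i + α * (max (rbar i - r) 0 - π i * S)
        = π i * (1 - α * S) + α * max (rbar i - r) 0 := by ring
    simp only [key]
    have : 0 ≤ 1 - α * S := by linarith
    positivity
  · simp only [Finset.sum_add_distrib, hsum, ← Finset.mul_sum, Finset.sum_sub_distrib,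
      ← Finset.sum_mul]
    ring
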